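/- Let K be a field and let D₁, D₂ be finite-dimensional division algebras over K (not necessarily central) such that gcd([D₁ : K], [D₂ : K]) = 1. Then D₁ ⊗_K D₂ is a division algebra over K. -/

import Mathlib

open scoped TensorProduct

lemma dvd_finrank_of_algHom (K D A M : Type*) [Field K] [DivisionRing D] [Algebra K D]
    [FiniteDimensional K D] [Ring A] [Algebra K A] [AddCommGroup M] [Module A M]
    [Module K M] [IsScalarTower K A M] [Module.Finite K M] (f : D →ₐ[K] A) :
    Module.finrank K D ∣ Module.finrank K M := by
  letI : Module D M := Module.compHom M f.toRingHom
  haveI : IsScalarTower K D M := by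
    constructor
    intro k d x
    show f (k • d) • x = k • (f d • x)
    rw [map_smul, Algebra.smul_def, mul_smul, algebraMap_smul]
  exact Dvd.intro _ (Module.finrank_mul_finrank K D M)

/-- If `D₁`, `D₂` are finite-dimensional division algebras over a field `K` of coprime
dimensions, then `D₁ ⊗[K] D₂` is a division algebra. -/
theorem tensor_product_of_coprime_dim_isDivision
    (K D₁ D₂ : Type*) [Field K]
    [DivisionRing D₁] [DivisionRing D₂] [Algebra K D₁] [Algebra K D₂]
    [FiniteDimensional K D₁] [FiniteDimensional K D₂]
    (h : Nat.Coprime (Module.finrank K D₁) (Module.finrank K D₂)) :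
    Nontrivial (D₁ ⊗[K] D₂) ∧ ∀ x : D₁ ⊗[K] D₂, x ≠ 0 → IsUnit x := by
  refine ⟨inferInstance, ?_⟩
  obtain ⟨m, hm⟩ := Ideal.exists_maximal (D₁ ⊗[K] D₂)
  haveI : Module.Finite K (D₁ ⊗[K] D₂ ⧸ m) := Module.Finite.quotient K m
  have h1 : Module.finrank K D₁ ∣ Module.finrank K (D₁ ⊗[K] D₂ ⧸ m) :=
    dvd_finrank_of_algHom K D₁ (D₁ ⊗[K] D₂) _ Algebra.TensorProduct.includeLeft
  have h2 : Module.finrank K D₂ ∣ Module.finrank K (D₁ ⊗[K] D₂ ⧸ m) :=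
    dvd_finrank_of_algHom K D₂ (D₁ ⊗[K] D₂) _ Algebra.TensorProduct.includeRight
  have hdvd : Module.finrank K D₁ * Module.finrank K D₂
      ∣ Module.finrank K (D₁ ⊗[K] D₂ ⧸ m) := h.mul_dvd_of_dvd_of_dvd h1 h2
  have hAfr : Module.finrank K (D₁ ⊗[K] D₂)
      = Module.finrank K D₁ * Module.finrank K D₂ := Module.finrank_tensorProduct
  have hq : Module.finrank K (D₁ ⊗[K] D₂ ⧸ m) + Module.finrank K (m.restrictScalars K)
      = Module.finrank K (D₁ ⊗[K] D₂) := by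
    have e : (D₁ ⊗[K] D₂ ⧸ (m.restrictScalars K)) ≃ₗ[K] (D₁ ⊗[K] D₂ ⧸ m) :=
      Submodule.Quotient.restrictScalarsEquiv K m
    rw [← e.finrank_eq]
    exact Submodule.finrank_quotient_add_finrank (m.restrictScalars K)
  have hMne : Module.finrank K (D₁ ⊗[K] D₂ ⧸ m) ≠ 0 := by
    haveI : Nontrivial (D₁ ⊗[K] D₂ ⧸ m) :=
      Submodule.Quotient.nontrivial_iff.mpr hm.ne_top
    exact Module.finrank_pos.ne'
  have heq : Module.finrank K (D₁ ⊗[K] D₂ ⧸ m) = Module.finrank K (D₁ ⊗[K] D₂) := by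
    rw [hAfr]
    refine Nat.le_antisymm (le_of_add_le_left (hAfr ▸ hq.le))
      (Nat.le_of_dvd (Nat.pos_of_ne_zero hMne) hdvd)
  have hm0 : Module.finrank K (m.restrictScalars K) = 0 := by omega
  have hmbot : m = ⊥ := by
    have := (Submodule.finrank_eq_zero (R := K) (S := m.restrictScalars K)).mp hm0
    rwa [Submodule.restrictScalars_eq_bot_iff] at this
  subst hmbot
  intro x hx
  have hsp : Ideal.span {x} = ⊤ := by
    refine hm.out.2 _ (bot_lt_iff_ne_bot.mpr ?_)
    intro hb
    exact hx (by simpa [Ideal.span_eq_bot] using hb)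
  have h1mem : (1 : D₁ ⊗[K] D₂) ∈ Ideal.span {x} := hsp ▸ Submodule.mem_top
  obtain ⟨a, ha⟩ := Submodule.mem_span_singleton.mp h1mem
  have hax : a * x = 1 := ha
  have hinj : Function.Injective (LinearMap.mulLeft K x) := by
    intro z w hz
    simp only [LinearMap.mulLeft_apply] at hz
    have : a * (x * z) = a * (x * w) := by rw [hz]
    rwa [← mul_assoc, ← mul_assoc, hax, one_mul, one_mul] at this
  obtain ⟨b, hb⟩ := LinearMap.surjective_of_injective hinj 1
  simp only [LinearMap.mulLeft_apply] at hb
  have hab : a = b := by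
    calc a = a * (x * b) := by rw [hb, mul_one]
    _ = (a * x) * b := by rw [mul_assoc]
    _ = b := by rw [hax, one_mul]
  exact ⟨⟨x, a, by rw [hab, hb], hax⟩, rfl⟩
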